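/- Let σ > 0 and c₁ ≠ 0. Suppose u : (0,∞) × ℝ → ℝ is continuously twice differentiable in S and once in t, solves the special-model PDE u_t + (1/2)·σ²S²·u_SS·u_S² / (u_S − c₁·S·u_SS)² = 0 at every point, and the denominator u_S − c₁·S·u_SS is nonzero everywhere. Then for every λ > 0, μ > 0, and a, c ∈ ℝ, the function v(S,t) = μ·u(S/λ, t − a) + c also solves the same PDE with nonvanishing denominator. (This is the solution-transformation content of the four-dimensional symmetry algebra L₄ = ⟨S∂_S, u∂_u, ∂_u, ∂_t⟩ of the special model.) -/

import Mathlib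

open Real Set

/-- Partial derivative of `u(S,t)` with respect to `S`. -/
noncomputable def pS (u : ℝ → ℝ → ℝ) (S t : ℝ) : ℝ := deriv (fun s => u s t) S

/-- Second partial derivative of `u(S,t)` with respect to `S`. -/
noncomputable def pSS (u : ℝ → ℝ → ℝ) (S t : ℝ) : ℝ := deriv (fun s => pS u s t) S

/-- Partial derivative of `u(S,t)` with respect to `t`. -/
noncomputable def pt (u : ℝ → ℝ → ℝ) (S t : ℝ) : ℝ := deriv (fun τ => u S τ) t

/-- `u` solves the special-model PDE
`u_t + (1/2) σ² S² u_SS u_S² / (u_S − c₁ S u_SS)² = 0` on `(0,∞) × ℝ`,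
with nonvanishing denominator. -/
def SolvesSpecialModel (σ c₁ : ℝ) (u : ℝ → ℝ → ℝ) : Prop :=
  ∀ S ∈ Set.Ioi (0 : ℝ), ∀ t : ℝ,
    pS u S t - c₁ * S * pSS u S t ≠ 0 ∧
    pt u S t + (1 / 2) * σ ^ 2 * S ^ 2 * pSS u S t * (pS u S t) ^ 2 /
      (pS u S t - c₁ * S * pSS u S t) ^ 2 = 0

/-- chain rule for scaling -/
lemma deriv_scale (f : ℝ → ℝ) (lam S : ℝ) (hlam : lam ≠ 0)
    (hf : DifferentiableAt ℝ f (S / lam)) :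
    deriv (fun s => f (s / lam)) S = deriv f (S / lam) / lam := by
  have h : (fun s => f (s / lam)) = f ∘ (fun s => s / lam) := rfl
  rw [h, deriv_comp S hf (differentiableAt_fun_id.div_const lam)]
  simp [deriv_div_const, div_eq_mul_inv]

/-- The solution-transformation content of the four-dimensional symmetry
algebra `L₄ = ⟨S∂_S, u∂_u, ∂_u, ∂_t⟩` of the special model: if `u` solves the
special model then so does `v(S,t) = μ u(S/λ, t−a) + c`. -/
theorem special_model_symmetry_L4
    (σ c₁ : ℝ) (hσ : 0 < σ) (hc₁ : c₁ ≠ 0)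
    (u : ℝ → ℝ → ℝ)
    (hreg : ∀ t : ℝ, ContDiffOn ℝ 2 (fun s => u s t) (Set.Ioi 0))
    (hregt : ∀ S ∈ Set.Ioi (0 : ℝ), ContDiff ℝ 1 (fun τ => u S τ))
    (hu : SolvesSpecialModel σ c₁ u)
    (lam μ a c : ℝ) (hlam : 0 < lam) (hμ : 0 < μ) :
    SolvesSpecialModel σ c₁ (fun S t => μ * u (S / lam) (t - a) + c) := by
  intro S hS t
  have hS0 : (0:ℝ) < S := hS
  have hlamne : lam ≠ 0 := hlam.ne'
  have hμne : μ ≠ 0 := hμ.ne'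
  have hopen : IsOpen (Set.Ioi (0:ℝ)) := isOpen_Ioi
  set t' := t - a with ht'
  -- differentiability of u and its S-derivative on Ioi 0
  have hdiffu : ∀ s ∈ Set.Ioi (0:ℝ), DifferentiableAt ℝ (fun s' => u s' t') s := by
    intro s hs
    exact ((hreg t').differentiableOn (by norm_num)).differentiableAt (hopen.mem_nhds hs)
  have hderivCD : ContDiffOn ℝ 1 (deriv (fun s' => u s' t')) (Set.Ioi 0) := by
    have := (hreg t').deriv_of_isOpen (m := 1) hopen (by norm_num)
    exact this
  have hdiffpS : ∀ s ∈ Set.Ioi (0:ℝ), DifferentiableAt ℝ (fun s' => pS u s' t') s := by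
    intro s hs
    have : DifferentiableAt ℝ (deriv (fun s' => u s' t')) s :=
      (hderivCD.differentiableOn (by norm_num)).differentiableAt (hopen.mem_nhds hs)
    exact this
  set v : ℝ → ℝ → ℝ := fun S t => μ * u (S / lam) (t - a) + c with hv
  -- first S derivative of v, for all s > 0
  have hpSv : ∀ s ∈ Set.Ioi (0:ℝ), pS v s t = μ / lam * pS u (s / lam) t' := by
    intro s hs
    have hs' : s / lam ∈ Set.Ioi (0:ℝ) := div_pos hs hlam
    have hd : DifferentiableAt ℝ (fun x => u (x / lam) t') s := by
      exact ((hdiffu _ hs').comp s (differentiableAt_id.div_const lam))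
    simp only [hv]
    unfold pS
    rw [show (fun x => μ * u (x / lam) (t - a) + c) = (fun x => μ * u (x / lam) t' + c) from rfl]
    rw [deriv_add_const, deriv_const_mul _ hd, deriv_scale _ _ _ hlamne (hdiffu _ hs')]
    ring
  -- second S derivative of v
  have hpSSv : pSS v S t = μ / lam ^ 2 * pSS u (S / lam) t' := by
    have hS' : S / lam ∈ Set.Ioi (0:ℝ) := div_pos hS0 hlam
    have hev : (fun s => pS v s t) =ᶠ[nhds S] (fun s => μ / lam * pS u (s / lam) t') := by
      filter_upwards [hopen.mem_nhds hS] with s hs using hpSv s hs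
    unfold pSS
    rw [hev.deriv_eq]
    have hd : DifferentiableAt ℝ (fun x => pS u (x / lam) t') S :=
      (hdiffpS _ hS').comp S (differentiableAt_id.div_const lam)
    rw [deriv_const_mul _ hd, deriv_scale _ _ _ hlamne (hdiffpS _ hS')]
    unfold pS
    ring
  -- t derivative of v
  have hptv : pt v S t = μ * pt u (S / lam) t' := by
    simp only [hv]
    unfold pt
    have hd : DifferentiableAt ℝ (fun τ => u (S / lam) (τ - a)) t := by
      have h1 : Differentiable ℝ (fun τ => u (S / lam) τ) :=
        (hregt _ (div_pos hS0 hlam)).differentiable one_ne_zero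
      exact (h1.comp (differentiable_id.sub_const a)).differentiableAt
    rw [deriv_add_const, deriv_const_mul _ hd, deriv_comp_sub_const]
  -- base PDE facts at (S/lam, t')
  obtain ⟨hden, hpde⟩ := hu (S / lam) (div_pos hS0 hlam) t'
  set A1 := pS u (S / lam) t'
  set A2 := pSS u (S / lam) t'
  set B := pt u (S / lam) t'
  set d := A1 - c₁ * (S / lam) * A2 with hd
  have hpSvS : pS v S t = μ / lam * A1 := hpSv S hS
  have hDen : pS v S t - c₁ * S * pSS v S t = μ / lam * d := by
    rw [hpSvS, hpSSv, hd]
    field_simp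
  refine ⟨by rw [hDen]; exact mul_ne_zero (div_ne_zero hμne hlamne) hden, ?_⟩
  have hfrac : (1 / 2) * σ ^ 2 * S ^ 2 * pSS v S t * (pS v S t) ^ 2 /
      (pS v S t - c₁ * S * pSS v S t) ^ 2
      = μ * ((1 / 2) * σ ^ 2 * (S / lam) ^ 2 * A2 * A1 ^ 2 / d ^ 2) := by
    have hDe : μ / lam * A1 - c₁ * S * (μ / lam ^ 2 * A2) = μ / lam * d := by
      rw [← hpSvS, ← hpSSv]; exact hDen
    rw [hpSvS, hpSSv, hDe]
    have hmd : μ / lam * d ≠ 0 := mul_ne_zero (div_ne_zero hμne hlamne) hden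
    field_simp
  rw [hptv, hfrac]
  have := hpde
  nlinarith [this]
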